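/- Let L ⊆ ℤⁿ be a lattice. Every strictly descending chain F̄₁ >_I F̄₂ >_I ⋯ of equivalence classes of I_L-fibers is finite; i.e., there is no infinite sequence of I_L-fibers (F_k) with F̄_{k+1} <_I F̄_k for all k. -/

import Mathlib

open MvPolynomial

noncomputable section

/-- The integer vector associated to a natural exponent vector. -/
def natVec {ι : Type*} (u : ι →₀ ℕ) : ι → ℤ := fun i => (u i : ℤ)

/-- The lattice ideal `I_L` of a lattice `L ⊆ ℤ^ι` in `k[x_i : i ∈ ι]`. -/
def latticeIdeal (k : Type*) [Field k] {ι : Type*} (L : Submodule ℤ (ι → ℤ)) :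
    Ideal (MvPolynomial ι k) :=
  Ideal.span {f | ∃ u v : ι →₀ ℕ, natVec u - natVec v ∈ L ∧
    f = monomial u (1 : k) - monomial v 1}

/-- `f` is a binomial `x^u - x^v` belonging to the lattice ideal `I_L`. -/
def IsLatticeBinomial (k : Type*) [Field k] {ι : Type*} (L : Submodule ℤ (ι → ℤ))
    (f : MvPolynomial ι k) : Prop :=
  ∃ u v : ι →₀ ℕ, natVec u - natVec v ∈ L ∧ f = monomial u (1 : k) - monomial v 1

/-- The `I_L`-fiber of `u` : all exponent vectors `v` with `v - u ∈ L`. -/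
def fiber {ι : Type*} (L : Submodule ℤ (ι → ℤ)) (u : ι →₀ ℕ) : Set (ι →₀ ℕ) :=
  {v | natVec v - natVec u ∈ L}

/-- `L⁺ = L ∩ ℕ^ι`. -/
def Lplus {ι : Type*} (L : Submodule ℤ (ι → ℤ)) : Set (ι → ℤ) :=
  {w | w ∈ L ∧ ∀ i, 0 ≤ w i}

/-- `L_pure`, the subgroup of `L` generated by `L⁺`. -/
def Lpure {ι : Type*} (L : Submodule ℤ (ι → ℤ)) : Submodule ℤ (ι → ℤ) :=
  Submodule.span ℤ (Lplus L)

/-- `σ_L`, the union of the supports of elements of `L⁺`. -/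
def sigmaL {ι : Type*} (L : Submodule ℤ (ι → ℤ)) : Set ι :=
  {i | ∃ w ∈ Lplus L, w i ≠ 0}

/-- `F̄ ≤_I Ḡ` : some translate of `F` is contained in `G`. -/
def fiberLE {ι : Type*} (F G : Set (ι →₀ ℕ)) : Prop :=
  ∃ t : ι →₀ ℕ, (fun v => t + v) '' F ⊆ G

/-- `F ≡_I G` : equivalence of fibers. -/
def fiberEquiv {ι : Type*} (F G : Set (ι →₀ ℕ)) : Prop :=
  fiberLE F G ∧ fiberLE G F

/-- `F̄ <_I Ḡ`. -/
def fiberLT {ι : Type*} (F G : Set (ι →₀ ℕ)) : Prop :=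
  fiberLE F G ∧ ¬ fiberEquiv F G

/-- The ideal `I_{<F̄}` generated by binomials of `I_L` whose fiber class is `<_I F̄`. -/
def idealLT (k : Type*) [Field k] {ι : Type*} (L : Submodule ℤ (ι → ℤ))
    (F : Set (ι →₀ ℕ)) : Ideal (MvPolynomial ι k) :=
  Ideal.span {f | ∃ u v : ι →₀ ℕ, natVec u - natVec v ∈ L ∧
    f = monomial u (1 : k) - monomial v 1 ∧ fiberLT (fiber L u) F}

/-- The ideal `I_{≤F̄}` generated by binomials of `I_L` whose fiber class is `≤_I F̄`. -/
def idealLE (k : Type*) [Field k] {ι : Type*} (L : Submodule ℤ (ι → ℤ))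
    (F : Set (ι →₀ ℕ)) : Ideal (MvPolynomial ι k) :=
  Ideal.span {f | ∃ u v : ι →₀ ℕ, natVec u - natVec v ∈ L ∧
    f = monomial u (1 : k) - monomial v 1 ∧ fiberLE (fiber L u) F}

/-- `μ(I_L)` : the least cardinality of a binomial generating set of `I_L`. -/
def muIdeal (k : Type*) [Field k] {ι : Type*} (L : Submodule ℤ (ι → ℤ)) : ℕ :=
  sInf {m | ∃ S : Finset (MvPolynomial ι k), S.card = m ∧
    (∀ f ∈ S, IsLatticeBinomial k L f) ∧
    Ideal.span (S : Set (MvPolynomial ι k)) = latticeIdeal k L}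

/-- A Markov basis of `I_L` : a binomial generating set of least cardinality `μ(I_L)`. -/
def IsMarkovBasis (k : Type*) [Field k] {ι : Type*} (L : Submodule ℤ (ι → ℤ))
    (S : Finset (MvPolynomial ι k)) : Prop :=
  (∀ f ∈ S, IsLatticeBinomial k L f) ∧
  Ideal.span (S : Set (MvPolynomial ι k)) = latticeIdeal k L ∧
  S.card = muIdeal k L

/-- `u` is an `L`-primitive vector : `u ≠ 0`, `u ∈ L`, and whenever `q • u ∈ L` for
a rational `q`, then `q` is an integer. -/
def IsLPrimitive {ι : Type*} (L : Submodule ℤ (ι → ℤ)) (u : ι → ℤ) : Prop :=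
  u ≠ 0 ∧ u ∈ L ∧ ∀ (q : ℚ) (w : ι → ℤ), w ∈ L →
    (∀ i, (w i : ℚ) = q * (u i : ℚ)) → ∃ m : ℤ, q = (m : ℚ)

/-- Projection onto the coordinates in `σ_L`. -/
def projSigma {n : ℕ} (L : Submodule ℤ (Fin n → ℤ)) :
    (Fin n → ℤ) →ₗ[ℤ] ({i : Fin n // i ∈ sigmaL L} → ℤ) :=
  LinearMap.pi fun j => LinearMap.proj j.1

/-- Projection onto the coordinates outside `σ_L` (giving `u ↦ u^σ`). -/
def projCompl {n : ℕ} (L : Submodule ℤ (Fin n → ℤ)) :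
    (Fin n → ℤ) →ₗ[ℤ] ({i : Fin n // i ∉ sigmaL L} → ℤ) :=
  LinearMap.pi fun j => LinearMap.proj j.1

/-- An indispensable binomial: it appears, up to a constant multiple, in every Markov basis. -/
def IsIndispensableBinomial (k : Type*) [Field k] {ι : Type*} (L : Submodule ℤ (ι → ℤ))
    (f : MvPolynomial ι k) : Prop :=
  ∀ S : Finset (MvPolynomial ι k), IsMarkovBasis k L S → ∃ c : k, c ≠ 0 ∧ c • f ∈ S

/-- An indispensable monomial: every Markov basis contains a binomial having it as a term. -/
def IsIndispensableMonomial (k : Type*) [Field k] {ι : Type*} (L : Submodule ℤ (ι → ℤ))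
    (u : ι →₀ ℕ) : Prop :=
  ∀ S : Finset (MvPolynomial ι k), IsMarkovBasis k L S → ∃ f ∈ S, ∃ v : ι →₀ ℕ,
    f = monomial u (1 : k) - monomial v 1 ∨ f = monomial v (1 : k) - monomial u 1


theorem fiberLE_trans {ι : Type*} {F G H : Set (ι →₀ ℕ)} (h1 : fiberLE F G)
    (h2 : fiberLE G H) : fiberLE F H := by
  obtain ⟨t, ht⟩ := h1
  obtain ⟨s, hs⟩ := h2
  refine ⟨s + t, ?_⟩
  rintro x ⟨y, hy, rfl⟩
  have : t + y ∈ G := ht ⟨y, hy, rfl⟩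
  have := hs ⟨t + y, this, rfl⟩
  simpa [add_assoc] using this

theorem fiberLE_of_le {ι : Type*} (L : Submodule ℤ (ι → ℤ)) {u u' : ι →₀ ℕ}
    (h : u ≤ u') : fiberLE (fiber L u) (fiber L u') := by
  refine ⟨u' - u, ?_⟩
  rintro x ⟨y, hy, rfl⟩
  have hy' : natVec y - natVec u ∈ L := hy
  have key : natVec (u' - u + y) - natVec u' = natVec y - natVec u := by
    funext i
    simp only [natVec, Pi.sub_apply, Finsupp.add_apply, Finsupp.tsub_apply]
    have hi : u i ≤ u' i := h i
    omega
  show natVec (u' - u + y) - natVec u' ∈ L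
  rw [key]; exact hy'

/-- there is no infinite strictly descending chain of equivalence classes
of `I_L`-fibers. -/
theorem stmt9 {n : ℕ} (L : Submodule ℤ (Fin n → ℤ)) :
    ¬ ∃ w : ℕ → (Fin n →₀ ℕ), ∀ m : ℕ,
      fiberLE (fiber L (w (m + 1))) (fiber L (w m)) ∧
      ¬ fiberEquiv (fiber L (w (m + 1))) (fiber L (w m)) := by
  rintro ⟨w, hw⟩
  -- chain transitivity : for i ≤ j, fiber (w j) ≤ fiber (w i)
  have chain : ∀ i j : ℕ, i ≤ j → fiberLE (fiber L (w j)) (fiber L (w i)) := by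
    intro i j hij
    induction j with
    | zero => simp_all; exact ⟨0, by rintro x ⟨y, hy, rfl⟩; simpa using hy⟩
    | succ j ih =>
      rcases Nat.lt_or_ge i (j+1) with h | h
      · exact fiberLE_trans (hw j).1 (ih (Nat.lt_succ_iff.mp h))
      · have : i = j + 1 := le_antisymm hij h
        subst this
        exact ⟨0, by rintro x ⟨y, hy, rfl⟩; simpa using hy⟩
  -- Dickson's lemma
  obtain ⟨i, j, hij, hle⟩ := (wellQuasiOrdered_le (α := Fin n →₀ ℕ)) w
  have h1 : fiberLE (fiber L (w i)) (fiber L (w j)) := fiberLE_of_le L hle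
  have h2 : fiberLE (fiber L (w j)) (fiber L (w (i + 1))) := chain (i+1) j hij
  exact (hw i).2 ⟨(hw i).1, fiberLE_trans h1 h2⟩
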